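/- arXiv:1606.05692 — 6 statements merged into one kernel-verified Lean document; each statement's English description precedes it below -/
import Mathlib

section
/- A unital ring A with no infinite set of nonzero pairwise orthogonal idempotents is right Rickart if and only if it is Baer. -/
section StmtAux
variable {A : Type*} [Ring A]

theorem stmt5_mem_iff {e : A} (he : e * e = e) {y : A} :
    (∃ b : A, y = e * b) ↔ e * y = y :=
  ⟨fun ⟨b, hb⟩ => by rw [hb, ← mul_assoc, he], fun h => ⟨y, h.symm⟩⟩

theorem stmt5_pair_step {S : Set A} {x e : A} (he : e * e = e)
    (hS : {a : A | ∀ s ∈ S, s * a = 0} = {y : A | ∃ b : A, y = e * b})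
    (R : ∀ x : A, ∃ e : A, e * e = e ∧
      {a : A | x * a = 0} = {y : A | ∃ b : A, y = e * b}) :
    ∃ g : A, g * g = g ∧
      {a : A | ∀ s ∈ insert x S, s * a = 0} = {y : A | ∃ b : A, y = g * b} := by
  obtain ⟨f, hf, hfann⟩ := R (x * e)
  have h2 : f * (1 - e) = 1 - e := by
    have h1 : (1 - e) ∈ {a : A | (x * e) * a = 0} := by
      simp only [Set.mem_setOf_eq, mul_sub, mul_one, mul_assoc, he, sub_self, mul_zero]
    rw [hfann] at h1
    exact (stmt5_mem_iff hf).mp h1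
  have hfe2 : f * e = f - (1 - e) := by
    have h3 : f - f * e = 1 - e := by rw [← h2, mul_sub, mul_one]
    rw [← h3, sub_sub_cancel]
  have hefe : e * (f * e) = e * f := by
    rw [hfe2, mul_sub, mul_sub, mul_one, he, sub_self, sub_zero]
  have hg : (e * f) * (e * f) = e * f := by
    calc (e * f) * (e * f) = (e * (f * e)) * f := by
          rw [mul_assoc e f (e * f), ← mul_assoc f e f, ← mul_assoc]
      _ = (e * f) * f := by rw [hefe]
      _ = e * f := by rw [mul_assoc, hf]
  refine ⟨e * f, hg, ?_⟩
  ext a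
  simp only [Set.mem_setOf_eq, Set.mem_insert_iff]
  rw [stmt5_mem_iff hg]
  constructor
  · intro H
    have hxA : x * a = 0 := H x (Or.inl rfl)
    have haS : a ∈ {a : A | ∀ s ∈ S, s * a = 0} := fun s hs => H s (Or.inr hs)
    rw [hS] at haS
    have hea : e * a = a := (stmt5_mem_iff he).mp haS
    have hfa : f * a = a := by
      have : a ∈ {b : A | (x * e) * b = 0} := by
        simp only [Set.mem_setOf_eq, mul_assoc, hea, hxA]
      rw [hfann] at this
      exact (stmt5_mem_iff hf).mp this
    rw [mul_assoc, hfa, hea]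
  · intro G
    have hea : e * a = a := by
      calc e * a = e * ((e * f) * a) := by rw [G]
        _ = ((e * e) * f) * a := by rw [← mul_assoc, ← mul_assoc]
        _ = a := by rw [he, G]
    have hfa : f * a = a := by
      have key : f * a = (f * e) * (f * a) := by
        calc f * a = f * ((e * f) * a) := by rw [G]
          _ = (f * e) * (f * a) := by simp only [mul_assoc]
      rw [hfe2, sub_mul, sub_mul, one_mul] at key
      have hefa : e * (f * a) = a := by rw [← mul_assoc, G]
      rw [← mul_assoc, hf, hefa] at key
      -- key : f * a = f * a - (f * a - a)
      have := key
      rw [sub_sub_cancel] at this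
      exact this.symm ▸ rfl
    have haS : e * a = a → ∀ s ∈ S, s * a = 0 := by
      intro hea' s hs
      have : a ∈ {y : A | ∃ b : A, y = e * b} := ⟨a, hea'.symm⟩
      rw [← hS] at this
      exact this s hs
    intro s hs
    rcases hs with rfl | hs
    · -- s = x
      have : a ∈ {y : A | ∃ b : A, y = f * b} := ⟨a, hfa.symm⟩
      rw [← hfann] at this
      have hxea : (s * e) * a = 0 := this
      rw [mul_assoc, hea] at hxea
      exact hxea
    · exact haS hea s hs


theorem stmt5_finset (R : ∀ x : A, ∃ e : A, e * e = e ∧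
      {a : A | x * a = 0} = {y : A | ∃ b : A, y = e * b})
    (pair : ∀ {S : Set A} {x e : A}, e * e = e →
      {a : A | ∀ s ∈ S, s * a = 0} = {y : A | ∃ b : A, y = e * b} →
      ∃ g : A, g * g = g ∧
        {a : A | ∀ s ∈ insert x S, s * a = 0} = {y : A | ∃ b : A, y = g * b})
    (F : Finset A) :
    ∃ e : A, e * e = e ∧
      {a : A | ∀ s ∈ (F : Set A), s * a = 0} = {y : A | ∃ b : A, y = e * b} := by
  classical
  induction F using Finset.induction_on with
  | empty =>
    refine ⟨1, one_mul 1, ?_⟩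
    ext a
    simp
  | insert _ _ hx ih =>
    obtain ⟨e, he, hS⟩ := ih
    obtain ⟨g, hg, hG⟩ := pair he hS
    exact ⟨g, hg, by rwa [Finset.coe_insert]⟩

theorem stmt5_min (X : Set A)
    (h : ¬ ∃ S : Set A, S.Infinite ∧ (∀ e ∈ S, e * e = e ∧ e ≠ 0) ∧
      (∀ e ∈ S, ∀ f ∈ S, e ≠ f → e * f = 0 ∧ f * e = 0)) :
    ∃ e ∈ {e : A | e * e = e ∧ ∃ F : Finset A, (F : Set A) ⊆ X ∧
        {a : A | ∀ s ∈ (F : Set A), s * a = 0} = {y : A | ∃ b : A, y = e * b}},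
      ∀ f ∈ {e : A | e * e = e ∧ ∃ F : Finset A, (F : Set A) ⊆ X ∧
        {a : A | ∀ s ∈ (F : Set A), s * a = 0} = {y : A | ∃ b : A, y = e * b}},
        {y : A | ∃ b : A, y = f * b} ⊆ {y : A | ∃ b : A, y = e * b} →
        {y : A | ∃ b : A, y = f * b} = {y : A | ∃ b : A, y = e * b} := by
  classical
  set E : Set A := {e : A | e * e = e ∧ ∃ F : Finset A, (F : Set A) ⊆ X ∧
      {a : A | ∀ s ∈ (F : Set A), s * a = 0} = {y : A | ∃ b : A, y = e * b}} with hE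
  have h1E : (1 : A) ∈ E := by
    refine ⟨one_mul 1, ∅, by simp, ?_⟩
    ext a; simp
  by_contra hmin
  push_neg at hmin
  -- build a strictly descending chain
  have step : ∀ e : {x : A // x ∈ E}, ∃ hh : {y : A // y ∈ E},
      e.1 * hh.1 = hh.1 ∧ hh.1 * e.1 = hh.1 ∧ hh.1 ≠ e.1 := by
    rintro ⟨e, heE⟩
    obtain ⟨f, hfE, hsub, hne⟩ := hmin e heE
    have he : e * e = e := heE.1
    have hf : f * f = f := hfE.1
    have hef : e * f = f := by
      have : f ∈ {y : A | ∃ b : A, y = e * b} := hsub ⟨f, hf.symm⟩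
      exact (stmt5_mem_iff he).mp this
    set g := f * e with hgdef
    have hgg : g * g = g := by
      calc (f * e) * (f * e) = f * (e * f) * e := by simp only [mul_assoc]
        _ = f * e := by rw [hef, hf]
    have hgA : {y : A | ∃ b : A, y = g * b} = {y : A | ∃ b : A, y = f * b} := by
      ext y
      constructor
      · rintro ⟨b, rfl⟩
        exact ⟨e * b, by rw [hgdef, mul_assoc]⟩
      · rintro ⟨b, rfl⟩
        refine ⟨f * b, ?_⟩
        have : g * f = f := by
          rw [hgdef, mul_assoc, hef, hf]
        rw [← mul_assoc, this]
    have hgE : g ∈ E := by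
      obtain ⟨F, hFX, hF⟩ := hfE.2
      exact ⟨hgg, F, hFX, by rw [hF, hgA]⟩
    refine ⟨⟨g, hgE⟩, ?_, ?_, ?_⟩
    · show e * g = g
      rw [hgdef, ← mul_assoc, hef]
    · show g * e = g
      rw [hgdef, mul_assoc, he]
    · intro hge
      apply hne
      have hge' : g = e := hge
      rw [← hgA, hge']
  choose nxt hn1 hn2 hn3 using step
  let seq : ℕ → {x : A // x ∈ E} := fun n => nxt^[n] ⟨1, h1E⟩
  have hseq : ∀ n, seq (n + 1) = nxt (seq n) := fun n =>
    Function.iterate_succ_apply' nxt n ⟨1, h1E⟩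
  have idem : ∀ n, (seq n).1 * (seq n).1 = (seq n).1 := fun n => (seq n).2.1
  have consec1 : ∀ n, (seq n).1 * (seq (n + 1)).1 = (seq (n + 1)).1 := by
    intro n; rw [hseq n]; exact hn1 (seq n)
  have consec2 : ∀ n, (seq (n + 1)).1 * (seq n).1 = (seq (n + 1)).1 := by
    intro n; rw [hseq n]; exact hn2 (seq n)
  have hned : ∀ n, (seq (n + 1)).1 ≠ (seq n).1 := by
    intro n; rw [hseq n]; exact hn3 (seq n)
  have rel : ∀ j i, i ≤ j →
      (seq i).1 * (seq j).1 = (seq j).1 ∧ (seq j).1 * (seq i).1 = (seq j).1 := by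
    intro j
    induction j with
    | zero =>
      intro i hi
      have : i = 0 := Nat.le_zero.mp hi
      subst this
      exact ⟨idem 0, idem 0⟩
    | succ j ih =>
      intro i hi
      rcases Nat.lt_or_ge i (j + 1) with hlt | hge
      · have hij : i ≤ j := Nat.lt_succ_iff.mp hlt
        obtain ⟨r1, r2⟩ := ih i hij
        constructor
        · calc (seq i).1 * (seq (j + 1)).1
              = (seq i).1 * ((seq j).1 * (seq (j + 1)).1) := by rw [consec1 j]
            _ = ((seq i).1 * (seq j).1) * (seq (j + 1)).1 := by rw [mul_assoc]
            _ = (seq j).1 * (seq (j + 1)).1 := by rw [r1]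
            _ = (seq (j + 1)).1 := consec1 j
        · calc (seq (j + 1)).1 * (seq i).1
              = ((seq (j + 1)).1 * (seq j).1) * (seq i).1 := by rw [consec2 j]
            _ = (seq (j + 1)).1 * ((seq j).1 * (seq i).1) := by rw [mul_assoc]
            _ = (seq (j + 1)).1 * (seq j).1 := by rw [r2]
            _ = (seq (j + 1)).1 := consec2 j
      · have heq : i = j + 1 := le_antisymm hi hge
        subst heq
        exact ⟨idem (j + 1), idem (j + 1)⟩
  set g : ℕ → A := fun n => (seq n).1 - (seq (n + 1)).1 with hgdef
  have gidem : ∀ n, g n * g n = g n := by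
    intro n
    simp only [hgdef]
    rw [sub_mul, mul_sub, mul_sub, idem n, consec1 n, consec2 n, idem (n + 1)]
    abel
  have gne : ∀ n, g n ≠ 0 := fun n => sub_ne_zero_of_ne (hned n).symm
  have orth1 : ∀ m n, m < n → g m * g n = 0 := by
    intro m n hmn
    simp only [hgdef]
    have h1 := (rel n m hmn.le).1
    have h2 := (rel (n + 1) m (by omega)).1
    have h3 := (rel n (m + 1) (by omega)).1
    have h4 := (rel (n + 1) (m + 1) (by omega)).1
    rw [sub_mul, mul_sub, mul_sub, h1, h2, h3, h4]
    abel
  have orth2 : ∀ m n, m < n → g n * g m = 0 := by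
    intro m n hmn
    simp only [hgdef]
    have h1 := (rel n m hmn.le).2
    have h2 := (rel (n + 1) m (by omega)).2
    have h3 := (rel n (m + 1) (by omega)).2
    have h4 := (rel (n + 1) (m + 1) (by omega)).2
    rw [sub_mul, mul_sub, mul_sub, h1, h2, h3, h4]
    abel
  have orth : ∀ m n, m ≠ n → g m * g n = 0 := by
    intro m n hmn
    rcases Nat.lt_or_ge m n with hlt | hge
    · exact orth1 m n hlt
    · exact orth2 n m (by omega)
  have ginj : Function.Injective g := by
    intro m n hmn
    by_contra hne'
    have : g m * g n = 0 := orth m n hne'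
    rw [← hmn, gidem m] at this
    exact gne m this
  apply h
  refine ⟨Set.range g, Set.infinite_range_of_injective ginj, ?_, ?_⟩
  · rintro e ⟨n, rfl⟩
    exact ⟨gidem n, gne n⟩
  · rintro e ⟨m, rfl⟩ f ⟨n, rfl⟩ hef
    have hmn : m ≠ n := fun hh => hef (by rw [hh])
    exact ⟨orth m n hmn, orth n m hmn.symm⟩


end StmtAux

/-- A unital ring with no infinite set of nonzero pairwise orthogonal idempotents is right
Rickart iff it is Baer. -/
theorem stmt5 (A : Type*) [Ring A]
    (h : ¬ ∃ S : Set A, S.Infinite ∧ (∀ e ∈ S, e * e = e ∧ e ≠ 0) ∧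
      (∀ e ∈ S, ∀ f ∈ S, e ≠ f → e * f = 0 ∧ f * e = 0)) :
    (∀ x : A, ∃ e : A, e * e = e ∧ {a : A | x * a = 0} = {y : A | ∃ b : A, y = e * b}) ↔
    (∀ X : Set A, ∃ e : A, e * e = e ∧
      {a : A | ∀ x ∈ X, x * a = 0} = {y : A | ∃ b : A, y = e * b}) := by
  constructor
  · intro R X
    classical
    obtain ⟨e, ⟨he, F, hFX, hF⟩, hminE⟩ := stmt5_min X h
    refine ⟨e, he, ?_⟩
    ext a
    simp only [Set.mem_setOf_eq]
    constructor
    · intro ha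
      have hmem : a ∈ {a : A | ∀ s ∈ (F : Set A), s * a = 0} :=
        fun s hs => ha s (hFX hs)
      rw [hF] at hmem
      exact hmem
    · intro ha x hx
      obtain ⟨g, hg, hG⟩ := stmt5_pair_step he hF R (x := x)
      have hG' : {a : A | ∀ s ∈ ((insert x F : Finset A) : Set A), s * a = 0}
          = {y : A | ∃ b : A, y = g * b} := by
        rw [Finset.coe_insert]; exact hG
      have hXsub : ((insert x F : Finset A) : Set A) ⊆ X := by
        rw [Finset.coe_insert]; exact Set.insert_subset hx hFX
      have hsub : {y : A | ∃ b : A, y = g * b} ⊆ {y : A | ∃ b : A, y = e * b} := by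
        rintro y ⟨b, rfl⟩
        have hy : g * b ∈ {a : A | ∀ s ∈ insert x (F : Set A), s * a = 0} := by
          rw [hG]; exact ⟨b, rfl⟩
        have hmem : g * b ∈ {a : A | ∀ s ∈ (F : Set A), s * a = 0} :=
          fun s hs => hy s (Set.mem_insert_iff.mpr (Or.inr hs))
        rw [hF] at hmem
        exact hmem
      have heq := hminE g ⟨hg, insert x F, hXsub, hG'⟩ hsub
      have haG : a ∈ {y : A | ∃ b : A, y = g * b} := by rw [heq]; exact ha
      rw [← hG] at haG
      exact haG x (Set.mem_insert x _)
  · intro B x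
    obtain ⟨e, he, hs⟩ := B {x}
    refine ⟨e, he, ?_⟩
    rw [← hs]
    ext a
    simp
end

section
/- Let A be a locally unital right semihereditary ring. Then for every idempotent u ∈ A and every x ∈ uAu, the right annihilator of x in the corner uAu is a direct summand of uAu as a right uAu-module. In particular A is locally right Rickart. -/
/-- A locally unital right semihereditary ring is locally right Rickart: in each corner `uAu`
the right annihilator of any element is a direct summand of `uAu` as a right module,
generated by an idempotent of the corner.  Right semihereditary is encoded by: for every
finitely generated right ideal `I = Σ xᵢA`, the canonical surjection `Aⁿ → I` splits. -/
theorem stmt9 (A : Type*) [NonUnitalRing A]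
    (hLU : ∀ F : Finset A, ∃ u : A, u * u = u ∧ ∀ x ∈ F, u * x = x ∧ x * u = x)
    (hSH : ∀ (n : ℕ) (x : Fin n → A), ∃ s : A → (Fin n → A),
      (∀ a b : A, (∃ c : Fin n → A, a = ∑ i, x i * c i) →
        (∃ c : Fin n → A, b = ∑ i, x i * c i) → s (a + b) = s a + s b) ∧
      (∀ a : A, (∃ c : Fin n → A, a = ∑ i, x i * c i) → ∀ r : A,
        s (a * r) = fun i => s a i * r) ∧
      (∀ a : A, (∃ c : Fin n → A, a = ∑ i, x i * c i) → ∑ i, x i * s a i = a)) :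
    ∀ u : A, u * u = u → ∀ x : A, u * x * u = x →
      ∃ e : A, u * e * u = e ∧ e * e = e ∧
        {a : A | u * a * u = a ∧ x * a = 0} =
          {y : A | ∃ b : A, u * b * u = b ∧ y = e * b} := by
  intro u hu x hx
  obtain ⟨s, hadd, hmul, hsec⟩ := hSH 1 (fun _ => x)
  set t : A → A := fun a => s a 0 with ht
  have hxu : x * u = x := by
    conv_lhs => rw [← hx]
    rw [mul_assoc, hu, hx]
  have memx : ∃ c : Fin 1 → A, x = ∑ i, (fun _ => x) i * c i :=
    ⟨fun _ => u, by simp [hxu]⟩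
  have hx0 : x * t x = x := by
    have := hsec x memx
    simpa using this
  have hlin : ∀ r : A, t (x * r) = t x * r := by
    intro r
    have := hmul x memx r
    exact congrFun this 0 ▸ rfl
  have ht0 : t 0 = 0 := by
    have h := hadd 0 0 ⟨0, by simp⟩ ⟨0, by simp⟩
    have h0 : s 0 = s 0 + s 0 := by simpa using h
    have hs0 : s 0 = 0 := by
      have := congrArg (fun f => f - s 0) h0
      simpa using this.symm
    simp [ht, hs0]
  obtain ⟨w, hw⟩ : ∃ w : A, w = u * t x * u := ⟨_, rfl⟩
  have huw : u * w = w := by rw [hw, ← mul_assoc, ← mul_assoc, hu]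
  have hwu : w * u = w := by rw [hw, mul_assoc, mul_assoc, hu, ← mul_assoc]
  have hxw : x * w = x := by
    rw [hw, ← mul_assoc, ← mul_assoc, hxu, hx0, hxu]
  have h1 : w * w = u * t x := by
    nth_rewrite 1 [hw]
    rw [mul_assoc, huw, mul_assoc, ← hlin, hxw]
  have hww : w * w = w := by
    have h2 : w * w = w * (w * u) := by rw [hwu]
    rw [h2, ← mul_assoc, h1, ← hw]
  refine ⟨u - w, ?_, ?_, ?_⟩
  · rw [mul_sub, huw, sub_mul, hwu, mul_assoc, hu, hu]
  · rw [sub_mul, mul_sub, mul_sub, hu, huw, hwu, hww]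
    abel
  · ext a
    simp only [Set.mem_setOf_eq]
    constructor
    · rintro ⟨hau, hxa⟩
      have hua : u * a = a := by
        conv_lhs => rw [← hau, ← mul_assoc, ← mul_assoc, hu]
        exact hau
      refine ⟨a, hau, ?_⟩
      have hwa : w * a = 0 := by
        rw [hw, mul_assoc, hua, mul_assoc, ← hlin, hxa, ht0, mul_zero]
      rw [sub_mul, hua, hwa, sub_zero]
    · rintro ⟨b, hb, rfl⟩
      have hub : u * b = b := by
        conv_lhs => rw [← hb, ← mul_assoc, ← mul_assoc, hu]
        exact hb
      have hbu : b * u = b := by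
        conv_lhs => rw [← hb, mul_assoc, mul_assoc, hu, ← mul_assoc]
        exact hb
      refine ⟨?_, ?_⟩
      · rw [← mul_assoc, mul_sub, hu, huw, mul_assoc, hbu]
      · rw [← mul_assoc, mul_sub, hxu, hxw, sub_self, zero_mul]
end

section
/- Let A be a unital *-ring that is von Neumann regular and proper (xx* = 0 implies x = 0). Then for every x ∈ A there is a projection p with xA = pA; in particular A is a Rickart *-ring. -/
theorem key {A : Type*} [Ring A] [StarRing A]
    (hreg : ∀ x : A, ∃ y : A, x * y * x = x)
    (hproper : ∀ x : A, x * star x = 0 → x = 0)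
    (x : A) :
    ∃ p : A, p * p = p ∧ star p = p ∧ p * x = x ∧ ∃ c : A, p = x * c := by
  set w := x * star x with hw_def
  have hw : star w = w := by simp [hw_def, star_mul, mul_assoc]
  obtain ⟨y0, hy0⟩ := hreg (w * w)
  set y := y0 * (w * w) * star y0 with hy_def
  have hy : star y = y := by
    simp [hy_def, star_mul, hw, mul_assoc]
  have hy0' : w * w * star y0 * (w * w) = w * w := by
    have := congrArg star hy0
    simpa [star_mul, hw, mul_assoc] using this
  have hyy : w * (w * (y * (w * w))) = w * w := by
    have h1 : w * (w * (y * (w * w))) = (w * w * y0 * (w * w)) * (star y0 * (w * w)) := by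
      simp [hy_def, mul_assoc]
    rw [h1, hy0]
    simpa [mul_assoc] using hy0'
  have hu : (w - w * w * y * w) * star (w - w * w * y * w) = 0 := by
    have hstar : star (w - w * w * y * w) = w - w * (y * (w * w)) := by
      simp [star_sub, star_mul, hw, hy, mul_assoc]
    rw [hstar]
    have expand : (w - w * w * y * w) * (w - w * (y * (w * w)))
        = w * w - w * (w * (y * (w * w))) - (w * (w * (y * w))) * w
          + (w * (w * (y * w))) * (w * (y * (w * w))) := by noncomm_ring
    rw [expand, hyy]
    have h3 : (w * (w * (y * w))) * w = w * (w * (y * (w * w))) := by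
      simp [mul_assoc]
    have h4 : (w * (w * (y * w))) * (w * (y * (w * w)))
        = w * (w * (y * (w * w))) * (y * (w * w)) := by
      simp [mul_assoc]
    rw [h3, hyy, h4, hyy]
    have h5 : w * w * (y * (w * w)) = w * (w * (y * (w * w))) := by simp [mul_assoc]
    rw [h5, hyy]
    abel
  -- w*w*y*w = w
  have hw1 : w * (w * (y * w)) = w := by
    have h := (sub_eq_zero.mp (hproper _ hu)).symm
    calc w * (w * (y * w)) = w * w * y * w := by simp [mul_assoc]
    _ = w := h
  have hw2 : w * (y * (w * w)) = w := by
    have := congrArg star hw1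
    calc w * (y * (w * w)) = star (w * (w * (y * w))) := by
          simp [star_mul, hw, hy, mul_assoc]
    _ = star w := congrArg star hw1
    _ = w := hw
  refine ⟨w * (y * w), ?_, ?_, ?_, ⟨star x * (y * w), by simp [hw_def, mul_assoc]⟩⟩
  · -- idempotent
    calc w * (y * w) * (w * (y * w)) = w * (y * (w * (w * (y * w)))) := by simp [mul_assoc]
    _ = w * (y * w) := by rw [hw1]
  · simp [star_mul, hw, hy, mul_assoc]
  · -- p * x = x via properness
    set p := w * (y * w) with hp_def
    have hps : star p = p := by simp [hp_def, star_mul, hw, hy, mul_assoc]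
    have hpw : p * w = w := by
      calc p * w = w * (y * (w * w)) := by simp [hp_def, mul_assoc]
      _ = w := hw2
    have hwp : w * p = w := by
      have := congrArg star hpw
      simpa [star_mul, hw, hps] using this
    have hv : (x - p * x) * star (x - p * x) = 0 := by
      have hstar : star (x - p * x) = star x - star x * p := by
        simp [star_sub, star_mul, hps]
      rw [hstar]
      have expand : (x - p * x) * (star x - star x * p)
          = x * star x - x * star x * p - p * (x * star x) + p * (x * star x) * p := by
        noncomm_ring
      rw [expand, ← hw_def, hwp, hpw, hwp]
      abel
    have := sub_eq_zero.mp (hproper _ hv)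
    exact this.symm

/-- A von Neumann regular proper unital `*`-ring has `xA = pA` for a projection `p`, for
every `x`; in particular it is a Rickart `*`-ring. -/
theorem stmt10 (A : Type*) [Ring A] [StarRing A]
    (hreg : ∀ x : A, ∃ y : A, x * y * x = x)
    (hproper : ∀ x : A, x * star x = 0 → x = 0) :
    (∀ x : A, ∃ p : A, p * p = p ∧ star p = p ∧
      {z : A | ∃ a : A, z = x * a} = {z : A | ∃ a : A, z = p * a}) ∧
    (∀ x : A, ∃ p : A, p * p = p ∧ star p = p ∧
      {a : A | x * a = 0} = {z : A | ∃ a : A, z = p * a}) := by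
  constructor
  · intro x
    obtain ⟨p, hpp, hps, hpx, c, hc⟩ := key hreg hproper x
    refine ⟨p, hpp, hps, ?_⟩
    ext z
    simp only [Set.mem_setOf_eq]
    constructor
    · rintro ⟨a, rfl⟩
      exact ⟨x * a, by rw [← mul_assoc, hpx]⟩
    · rintro ⟨a, rfl⟩
      exact ⟨c * a, by rw [hc, mul_assoc]⟩
  · intro x
    obtain ⟨q, hqq, hqs, hqx, c, hc⟩ := key hreg hproper (star x)
    have hxq : x * q = x := by
      have := congrArg star hqx
      simpa [star_mul, hqs] using this
    refine ⟨1 - q, by noncomm_ring [hqq], by simp [hqs], ?_⟩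
    ext a
    simp only [Set.mem_setOf_eq]
    constructor
    · intro hxa
      refine ⟨a, ?_⟩
      have h1 : star a * q = 0 := by
        rw [hc, ← mul_assoc]
        have : star a * star x = 0 := by
          have := congrArg star hxa
          simpa [star_mul] using this
        rw [this, zero_mul]
      have h2 : q * a = 0 := by
        have := congrArg star h1
        simpa [star_mul, hqs] using this
      rw [sub_mul, one_mul, h2, sub_zero]
    · rintro ⟨b, rfl⟩
      rw [← mul_assoc, mul_sub, mul_one, hxq, sub_self, zero_mul]
end

section
/- Let A be a unital *-ring that is not *-symmetric, i.e., there exists x ∈ A such that 1 + xx* is not invertible. Then for every integer n > 1, the matrix ring Mₙ(A) with the *-transpose involution is not a Rickart *-ring. -/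
/-- If a unital `*`-ring `A` is not `*`-symmetric, then for every `n > 1` the matrix ring
`Mₙ(A)` with the `*`-transpose involution is not a Rickart `*`-ring. -/
theorem stmt12 (A : Type*) [Ring A] [StarRing A]
    (h : ∃ x : A, ¬ IsUnit (1 + x * star x)) (n : ℕ) (hn : 1 < n) :
    ¬ (∀ M : Matrix (Fin n) (Fin n) A, ∃ p : Matrix (Fin n) (Fin n) A,
        p * p = p ∧ star p = p ∧
        {N : Matrix (Fin n) (Fin n) A | M * N = 0} =
          {N : Matrix (Fin n) (Fin n) A | ∃ B : Matrix (Fin n) (Fin n) A, N = p * B}) := by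
  intro H
  obtain ⟨x, hx⟩ := h
  set i0 : Fin n := ⟨0, by omega⟩ with hi0
  set i1 : Fin n := ⟨1, hn⟩ with hi1
  have h01 : i0 ≠ i1 := by simp [hi0, hi1, Fin.ext_iff]
  set E : Matrix (Fin n) (Fin n) A := Matrix.single i0 i0 (1 : A) with hE
  set F : Matrix (Fin n) (Fin n) A := Matrix.single i1 i0 (star x) with hF
  set f : Matrix (Fin n) (Fin n) A := E + F with hfdef
  have hff : f * f = f := by
    rw [hfdef, add_mul, mul_add, mul_add, hE, hF,
      Matrix.single_mul_single_same, Matrix.single_mul_single_same,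
      Matrix.single_mul_single_of_ne (h := h01),
      Matrix.single_mul_single_of_ne (h := h01)]
    simp
  obtain ⟨p, hpp, hps, hset⟩ := H (1 - f)
  have hfmem : f ∈ {N : Matrix (Fin n) (Fin n) A | (1 - f) * N = 0} := by
    simp only [Set.mem_setOf_eq, sub_mul, one_mul, hff, sub_self]
  rw [hset] at hfmem
  obtain ⟨B, hB⟩ := hfmem
  have hpf : p * f = f := by rw [hB, ← mul_assoc, hpp]
  have hpmem : p ∈ {N : Matrix (Fin n) (Fin n) A | ∃ B, N = p * B} := ⟨p, hpp.symm⟩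
  rw [← hset] at hpmem
  have hfp : f * p = p := by
    have h0 : (1 - f) * p = 0 := hpmem
    rw [sub_mul, one_mul, sub_eq_zero] at h0
    exact h0.symm
  -- entry facts
  set a : A := p i0 i0 with ha
  have hsa : star a = a := by
    conv_rhs => rw [ha, ← hps]
    simp [Matrix.star_apply]
    exact ha
  have h10 : p i1 i0 = star x * a := by
    conv_lhs => rw [← hfp]
    rw [hfdef, add_mul, Matrix.add_apply, hE, hF,
      Matrix.single_mul_apply_of_ne (h := h01.symm),
      Matrix.single_mul_apply_same]
    rw [zero_add]
  have h01' : p i0 i1 = a * x := by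
    have : p i0 i1 = star (p i1 i0) := by
      conv_lhs => rw [← hps]
      simp [Matrix.star_apply]
    rw [this, h10, star_mul, star_star, hsa]
  have hkey : a * (1 + x * star x) = 1 := by
    have h2 : (p * f) i0 i0 = f i0 i0 := by rw [hpf]
    rw [hfdef, mul_add, Matrix.add_apply, Matrix.add_apply, hE, hF,
      Matrix.mul_single_apply_same,
      Matrix.mul_single_apply_same,
      Matrix.single_apply_same,
      Matrix.single_apply_of_row_ne h01.symm] at h2
    rw [h01', ← ha, mul_one, add_zero] at h2
    rw [mul_add, mul_one, ← mul_assoc]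
    exact h2
  have hkey2 : (1 + x * star x) * a = 1 := by
    have := congrArg star hkey
    rwa [star_mul, star_one, star_add, star_one, star_mul, star_star, hsa] at this
  exact hx ⟨⟨1 + x * star x, a, hkey2, hkey⟩, rfl⟩
end

section
/- Let A be a unital *-ring which is *-symmetric (1 + xx* is invertible for all x). Then for every idempotent e ∈ A there exists a projection p with eA = pA. Consequently, a *-symmetric ring is right Rickart if and only if it is a Rickart *-ring. -/
theorem aux17 {A : Type*} [Ring A] [StarRing A]
    (h : ∀ x : A, IsUnit (1 + x * star x)) (e : A) (he : e * e = e) :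
    ∃ p : A, p * p = p ∧ star p = p ∧ p * e = e ∧ e * p = p := by
  have he' : star e * star e = star e := by rw [← star_mul, he]
  have he2 : ∀ x : A, e * (e * x) = e * x := by
    intro x; rw [← mul_assoc, he]
  have he'2 : ∀ x : A, star e * (star e * x) = star e * x := by
    intro x; rw [← mul_assoc, he']
  set z : A := 1 - e - star e + e * star e + star e * e with hzdef
  have hzu : IsUnit z := by
    have h1 := h (e - star e)
    have h2 : (1 : A) + (e - star e) * star (e - star e) = z := by
      rw [hzdef]
      simp only [star_sub, star_star]
      rw [sub_mul, mul_sub, mul_sub, he, he']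
      abel
    rwa [h2] at h1
  obtain ⟨v, hv⟩ := hzu
  have hstarz : star z = z := by
    rw [hzdef]
    simp only [star_add, star_sub, star_mul, star_one, star_star]
    abel
  have hze : z * e = e * (star e * e) := by
    rw [hzdef]
    simp only [add_mul, sub_mul, one_mul, mul_assoc, he, he', he2, he'2]
    abel
  have hez : e * z = e * (star e * e) := by
    rw [hzdef]
    simp only [mul_add, mul_sub, mul_one, mul_assoc, he, he', he2, he'2]
    abel
  have hcomm : z * e = e * z := by rw [hze, hez]
  set u : A := ((v⁻¹ : Aˣ) : A) with hudef
  have huz : u * z = 1 := by rw [hudef, ← hv]; exact v.inv_mul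
  have hzu' : z * u = 1 := by rw [hudef, ← hv]; exact v.mul_inv
  have hue : u * e = e * u := by
    have h1 : u * (z * e) * u = u * (e * z) * u := by rw [hcomm]
    rw [← mul_assoc, ← mul_assoc, huz, one_mul, mul_assoc, mul_assoc, hzu', mul_one] at h1
    exact h1.symm
  have hstaru : star u = u := by
    have h1 : star u * z = 1 := by
      rw [← hstarz, ← star_mul, hzu', star_one]
    calc star u = star u * (z * u) := by rw [hzu', mul_one]
      _ = (star u * z) * u := by rw [mul_assoc]
      _ = u := by rw [h1, one_mul]
  have hcomm' : z * star e = star e * z := by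
    have h1 := congrArg star hcomm
    simpa [star_mul, hstarz] using h1.symm
  have hue' : u * star e = star e * u := by
    have h1 : u * (z * star e) * u = u * (star e * z) * u := by rw [hcomm']
    rw [← mul_assoc, ← mul_assoc, huz, one_mul, mul_assoc, mul_assoc, hzu', mul_one] at h1
    exact h1.symm
  have hez' : e * star e * e = e * z := by rw [hez, mul_assoc]
  have hpe : e * star e * u * e = e := by
    rw [mul_assoc, hue, ← mul_assoc, hez', mul_assoc, hzu', mul_one]
  refine ⟨e * star e * u, ?_, ?_, hpe, ?_⟩
  · rw [← mul_assoc, ← mul_assoc, hpe]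
  · rw [star_mul, star_mul, hstaru, star_star, ← mul_assoc, hue, mul_assoc, hue',
      ← mul_assoc]
  · rw [← mul_assoc, ← mul_assoc, he]

/-- In a `*`-symmetric unital `*`-ring, every right ideal generated by an idempotent is
generated by a projection; consequently such a ring is right Rickart iff it is a
Rickart `*`-ring. -/
theorem stmt17 (A : Type*) [Ring A] [StarRing A]
    (h : ∀ x : A, IsUnit (1 + x * star x)) :
    (∀ e : A, e * e = e → ∃ p : A, p * p = p ∧ star p = p ∧
      {y : A | ∃ a : A, y = e * a} = {y : A | ∃ a : A, y = p * a}) ∧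
    ((∀ x : A, ∃ e : A, e * e = e ∧
        {a : A | x * a = 0} = {y : A | ∃ b : A, y = e * b}) ↔
     (∀ x : A, ∃ p : A, p * p = p ∧ star p = p ∧
        {a : A | x * a = 0} = {y : A | ∃ b : A, y = p * b})) := by
  have main : ∀ e : A, e * e = e → ∃ p : A, p * p = p ∧ star p = p ∧
      {y : A | ∃ a : A, y = e * a} = {y : A | ∃ a : A, y = p * a} := by
    intro e he
    obtain ⟨p, hpp, hps, hpe, hep⟩ := aux17 h e he
    refine ⟨p, hpp, hps, ?_⟩
    ext y
    constructor
    · rintro ⟨a, rfl⟩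
      exact ⟨e * a, by rw [← mul_assoc, hpe]⟩
    · rintro ⟨a, rfl⟩
      exact ⟨p * a, by rw [← mul_assoc, hep]⟩
  refine ⟨main, ?_, ?_⟩
  · intro H x
    obtain ⟨e, he, hset⟩ := H x
    obtain ⟨p, hpp, hps, hset2⟩ := main e he
    exact ⟨p, hpp, hps, hset.trans hset2⟩
  · intro H x
    obtain ⟨p, hpp, _, hset⟩ := H x
    exact ⟨p, hpp, hset⟩
end

section
/- Let R be a unital ring, p an idempotent of R, and φ : R → pRp a unital ring isomorphism, with * an involution on R such that φ is a *-isomorphism (so p is a projection). In the corner skew Laurent polynomial ring R[t₊, t₋, φ] with the involution satisfying (t₋ⁱ r)* = r* t₊ⁱ and (r t₊ⁱ)* = t₋ⁱ r*, if R is positive definite then R[t₊, t₋, φ] is positive definite. -/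
/-- A corner skew Laurent polynomial ring `S = R[tp,tm,φ]` over a positive definite `*`-ring
`R` is positive definite.  The ring `S` is axiomatized by: an embedding `ι : R → S`, elements
`tp, tm` satisfying `tmtp = 1`, `tptm = ι p`, `ι r · tm = tm · ι (φ r)`,
`tp · ι r = ι (φ r) · tp`, `(tp)* = tm`, where `φ` is a unital `*`-isomorphism of `R` onto
the corner `pRp`; every element of `S` is a finite sum
`ι c + Σ tmⁱ ι(aᵢ) + Σ ι(bⱼ) tpʲ`, and `π : S → R` is the additive "constant term" map. -/
theorem stmt19 (R S : Type*) [Ring R] [StarRing R] [Ring S] [StarRing S]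
    (p : R) (hp : p * p = p) (hpstar : star p = p)
    (φ : R → R)
    (hφadd : ∀ a b : R, φ (a + b) = φ a + φ b)
    (hφmul : ∀ a b : R, φ (a * b) = φ a * φ b)
    (hφone : φ 1 = p)
    (hφstar : ∀ a : R, φ (star a) = star (φ a))
    (hφinj : Function.Injective φ)
    (hφcorner : ∀ r : R, p * φ r * p = φ r)
    (hφsurj : ∀ x : R, p * x * p = x → ∃ r : R, φ r = x)
    (ι : R →+* S) (hι : Function.Injective ι)
    (hιstar : ∀ r : R, ι (star r) = star (ι r))
    (tp tm : S)
    (h1 : tm * tp = 1) (h2 : tp * tm = ι p)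
    (h3 : ∀ r : R, ι r * tm = tm * ι (φ r))
    (h4 : ∀ r : R, tp * ι r = ι (φ r) * tp)
    (hstart : star tp = tm)
    (hgen : ∀ s : S, ∃ (m : ℕ) (c : R) (a b : ℕ → R),
      s = ι c + (∑ i ∈ Finset.range m, tm ^ (i + 1) * ι (a i)) +
        ∑ i ∈ Finset.range m, ι (b i) * tp ^ (i + 1))
    (π : S →+ R)
    (hπι : ∀ r : R, π (ι r) = r)
    (hpim : ∀ (i : ℕ) (r : R), π (tm ^ (i + 1) * ι r) = 0)
    (hpip : ∀ (i : ℕ) (r : R), π (ι r * tp ^ (i + 1)) = 0)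
    (hR : ∀ (m : ℕ) (r : Fin m → R), ∑ i, r i * star (r i) = 0 → ∀ i, r i = 0) :
    ∀ (m : ℕ) (x : Fin m → S), ∑ i, x i * star (x i) = 0 → ∀ i, x i = 0 := by
  -- the corner idempotents q k = φ^[k] 1
  set q : ℕ → R := fun k => φ^[k] 1 with hqdef
  have hq0 : q 0 = 1 := rfl
  have hqs : ∀ k, q (k + 1) = φ (q k) := fun k => Function.iterate_succ_apply' φ k 1
  have hφk_mul : ∀ (k : ℕ) (a b : R), φ^[k] (a * b) = φ^[k] a * φ^[k] b := by
    intro k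
    induction k with
    | zero => intro a b; rfl
    | succ k ih =>
      intro a b
      rw [Function.iterate_succ_apply', Function.iterate_succ_apply',
        Function.iterate_succ_apply', ih, hφmul]
  have hφk_star : ∀ (k : ℕ) (a : R), φ^[k] (star a) = star (φ^[k] a) := by
    intro k
    induction k with
    | zero => intro a; rfl
    | succ k ih =>
      intro a
      rw [Function.iterate_succ_apply', Function.iterate_succ_apply', ih, hφstar]
  have hcorner_r : ∀ r : R, φ r * p = φ r := by
    intro r
    conv_lhs => rw [← hφcorner r]
    rw [mul_assoc, mul_assoc, hp, ← mul_assoc, hφcorner]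
  have hq_idem : ∀ k, q k * q k = q k := by
    intro k
    induction k with
    | zero => rw [hq0, one_mul]
    | succ k ih => rw [hqs, ← hφmul, ih]
  have hq_star : ∀ k, star (q k) = q k := by
    intro k
    induction k with
    | zero => rw [hq0, star_one]
    | succ k ih => rw [hqs, ← hφstar, ih]
  have htmtp : ∀ k, tm ^ k * tp ^ k = 1 := by
    intro k
    induction k with
    | zero => simp
    | succ k ih =>
      rw [pow_succ, pow_succ']
      calc tm ^ k * tm * (tp * tp ^ k) = tm ^ k * (tm * tp) * tp ^ k := by
            rw [mul_assoc, mul_assoc, mul_assoc]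
        _ = 1 := by rw [h1, mul_one, ih]
  have htptm : ∀ k, tp ^ k * tm ^ k = ι (q k) := by
    intro k
    induction k with
    | zero => simp [hq0]
    | succ k ih =>
      rw [pow_succ', pow_succ]
      calc tp * tp ^ k * (tm ^ k * tm) = tp * (tp ^ k * tm ^ k) * tm := by
            rw [mul_assoc, mul_assoc, mul_assoc]
        _ = tp * ι (q k) * tm := by rw [ih]
        _ = ι (φ (q k)) * (tp * tm) := by rw [h4, mul_assoc]
        _ = ι (φ (q k) * p) := by rw [h2, ← map_mul]
        _ = ι (q (k + 1)) := by rw [hcorner_r, hqs]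
  have hmovep : ∀ (k : ℕ) (r : R), tp ^ k * ι r = ι (φ^[k] r) * tp ^ k := by
    intro k
    induction k with
    | zero => intro r; simp
    | succ k ih =>
      intro r
      rw [pow_succ, mul_assoc, h4, ← mul_assoc, ih, mul_assoc, ← pow_succ,
        Function.iterate_succ_apply]
  have hmovem : ∀ (k : ℕ) (r : R), ι r * tm ^ k = tm ^ k * ι (φ^[k] r) := by
    intro k
    induction k with
    | zero => intro r; simp
    | succ k ih =>
      intro r
      rw [pow_succ', ← mul_assoc, h3, mul_assoc, ih, ← mul_assoc, ← pow_succ',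
        Function.iterate_succ_apply]
  have hqtp : ∀ k, ι (q k) * tp ^ k = tp ^ k := by
    intro k
    rw [← htptm, mul_assoc, htmtp, mul_one]
  -- padding sums
  have hpad : ∀ (N N' : ℕ) (d : ℕ → R), N ≤ N' →
      ∑ j ∈ Finset.range N, ι (d j) * tp ^ (j + 1) =
        ∑ j ∈ Finset.range N', ι (if j < N then d j else 0) * tp ^ (j + 1) := by
    intro N N' d h
    rw [← Finset.sum_subset (Finset.range_subset_range.2 h)
      (fun j _ hj => by rw [if_neg (fun hc => hj (Finset.mem_range.2 hc)), map_zero, zero_mul])]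
    exact Finset.sum_congr rfl fun j hj => by rw [if_pos (Finset.mem_range.1 hj)]
  -- "good" elements: sums of ι r * tp^(j+1)
  have hGsingle : ∀ (r : R) (e : ℕ), ∃ (N : ℕ) (d : ℕ → R),
      ι r * tp ^ (e + 1) = ∑ j ∈ Finset.range N, ι (d j) * tp ^ (j + 1) := by
    intro r e
    refine ⟨e + 1, fun j => if j = e then r else 0, ?_⟩
    rw [Finset.sum_eq_single_of_mem e (Finset.self_mem_range_succ e)
      (fun j _ hje => by simp [hje])]
    simp
  have hGadd : ∀ s₁ s₂ : S,
      (∃ (N : ℕ) (d : ℕ → R), s₁ = ∑ j ∈ Finset.range N, ι (d j) * tp ^ (j + 1)) →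
      (∃ (N : ℕ) (d : ℕ → R), s₂ = ∑ j ∈ Finset.range N, ι (d j) * tp ^ (j + 1)) →
      ∃ (N : ℕ) (d : ℕ → R), s₁ + s₂ = ∑ j ∈ Finset.range N, ι (d j) * tp ^ (j + 1) := by
    rintro s₁ s₂ ⟨N₁, d₁, rfl⟩ ⟨N₂, d₂, rfl⟩
    refine ⟨max N₁ N₂, fun j => (if j < N₁ then d₁ j else 0) + (if j < N₂ then d₂ j else 0), ?_⟩
    rw [hpad N₁ (max N₁ N₂) d₁ (le_max_left _ _), hpad N₂ (max N₁ N₂) d₂ (le_max_right _ _),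
      ← Finset.sum_add_distrib]
    exact Finset.sum_congr rfl fun j _ => by rw [map_add, add_mul]
  have hGsum : ∀ (n : ℕ) (f : ℕ → S),
      (∀ i, i < n → ∃ (N : ℕ) (d : ℕ → R), f i = ∑ j ∈ Finset.range N, ι (d j) * tp ^ (j + 1)) →
      ∃ (N : ℕ) (d : ℕ → R),
        ∑ i ∈ Finset.range n, f i = ∑ j ∈ Finset.range N, ι (d j) * tp ^ (j + 1) := by
    intro n
    induction n with
    | zero => intro f _; exact ⟨0, fun _ => 0, by simp⟩
    | succ n ih =>
      intro f hf
      rw [Finset.sum_range_succ]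
      exact hGadd _ _ (ih f fun i hi => hf i (Nat.lt_succ_of_lt hi))
        (hf n (Nat.lt_succ_self n))
  -- every element, multiplied by a high power of tp, is good
  have hrep : ∀ s : S, ∃ (M N : ℕ) (d : ℕ → R),
      tp ^ M * s = ∑ j ∈ Finset.range N, ι (d j) * tp ^ (j + 1) := by
    intro s
    obtain ⟨m, c, a, b, rfl⟩ := hgen s
    refine ⟨m + 1, ?_⟩
    rw [mul_add, mul_add, Finset.mul_sum, Finset.mul_sum]
    refine hGadd _ _ (hGadd _ _ ?_ ?_) ?_
    · -- constant part
      rw [hmovep]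
      exact hGsingle _ m
    · -- negative part
      refine hGsum m _ fun i hi => ?_
      have he : m + 1 = (m - i) + (i + 1) := by omega
      have he2 : m - i - 1 + 1 = m - i := by omega
      rw [he, pow_add, mul_assoc, ← mul_assoc (tp ^ (i + 1)), htptm, ← map_mul,
        hmovep, ← he2]
      exact hGsingle _ _
    · -- positive part
      refine hGsum m _ fun i _ => ?_
      have he : m + 1 + (i + 1) = (m + i + 1) + 1 := by omega
      rw [← mul_assoc, hmovep, mul_assoc, ← pow_add, he]
      exact hGsingle _ _
  have hsplit : ∀ j k : ℕ, j ≤ k → tp ^ j * tm ^ k = ι (q j) * tm ^ (k - j) := by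
    intro j k h
    calc tp ^ j * tm ^ k = tp ^ j * (tm ^ j * tm ^ (k - j)) := by
          rw [← pow_add, Nat.add_sub_cancel' h]
      _ = ι (q j) * tm ^ (k - j) := by rw [← mul_assoc, htptm]
  have hsplit2 : ∀ j k : ℕ, k ≤ j → tp ^ j * tm ^ k = tp ^ (j - k) * ι (q k) := by
    intro j k h
    calc tp ^ j * tm ^ k = tp ^ (j - k) * tp ^ k * tm ^ k := by
          rw [← pow_add, Nat.sub_add_cancel h]
      _ = tp ^ (j - k) * ι (q k) := by rw [mul_assoc, htptm]
  -- the constant term of a product of good monomials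
  have hTerm : ∀ (r s : R) (j k : ℕ),
      π (ι r * tp ^ (j + 1) * (tm ^ (k + 1) * ι s)) =
        if j = k then r * q (j + 1) * s else 0 := by
    intro r s j k
    rcases lt_trichotomy j k with h | h | h
    · have hk2 : k - j - 1 + 1 = k - j := by omega
      have key : ι r * tp ^ (j + 1) * (tm ^ (k + 1) * ι s) =
          tm ^ (k - j - 1 + 1) * ι (φ^[k - j] (r * q (j + 1)) * s) := by
        calc ι r * tp ^ (j + 1) * (tm ^ (k + 1) * ι s)
            = ι r * (tp ^ (j + 1) * tm ^ (k + 1)) * ι s := by simp only [mul_assoc]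
          _ = ι r * (ι (q (j + 1)) * tm ^ (k - j)) * ι s := by
              rw [hsplit _ _ (by omega), Nat.succ_sub_succ]
          _ = ι (r * q (j + 1)) * tm ^ (k - j) * ι s := by rw [← mul_assoc, ← map_mul]
          _ = tm ^ (k - j) * (ι (φ^[k - j] (r * q (j + 1))) * ι s) := by
              rw [hmovem, mul_assoc]
          _ = tm ^ (k - j - 1 + 1) * ι (φ^[k - j] (r * q (j + 1)) * s) := by
              rw [← map_mul, hk2]
      rw [if_neg (Nat.ne_of_lt h), key]
      exact hpim _ _
    · subst h
      have key : ι r * tp ^ (j + 1) * (tm ^ (j + 1) * ι s) = ι (r * q (j + 1) * s) := by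
        calc ι r * tp ^ (j + 1) * (tm ^ (j + 1) * ι s)
            = ι r * (tp ^ (j + 1) * tm ^ (j + 1)) * ι s := by simp only [mul_assoc]
          _ = ι (r * q (j + 1) * s) := by rw [htptm, ← map_mul, ← map_mul]
      rw [if_pos rfl, key, hπι]
    · have hj2 : j - k - 1 + 1 = j - k := by omega
      have key : ι r * tp ^ (j + 1) * (tm ^ (k + 1) * ι s) =
          ι (r * φ^[j - k] (q (k + 1)) * φ^[j - k] s) * tp ^ (j - k - 1 + 1) := by
        calc ι r * tp ^ (j + 1) * (tm ^ (k + 1) * ι s)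
            = ι r * (tp ^ (j + 1) * tm ^ (k + 1)) * ι s := by simp only [mul_assoc]
          _ = ι r * (tp ^ (j - k) * ι (q (k + 1))) * ι s := by
              rw [hsplit2 _ _ (by omega), Nat.succ_sub_succ]
          _ = ι r * (ι (φ^[j - k] (q (k + 1))) * tp ^ (j - k)) * ι s := by rw [hmovep]
          _ = ι (r * φ^[j - k] (q (k + 1))) * (tp ^ (j - k) * ι s) := by
              simp only [map_mul, mul_assoc]
          _ = ι (r * φ^[j - k] (q (k + 1))) * (ι (φ^[j - k] s) * tp ^ (j - k)) := by
              rw [hmovep]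
          _ = ι (r * φ^[j - k] (q (k + 1)) * φ^[j - k] s) * tp ^ (j - k - 1 + 1) := by
              rw [← mul_assoc, ← map_mul, hj2]
      rw [if_neg (Nat.ne_of_gt h), key]
      exact hpip _ _
  -- main argument
  intro n x hx
  choose Mf Nf df hdf using fun i => hrep (x i)
  set M := Finset.univ.sup Mf with hMdef
  have hM : ∀ i, Mf i ≤ M := fun i => Finset.le_sup (Finset.mem_univ i)
  have hy : ∀ i, ∃ (N : ℕ) (e : ℕ → R),
      tp ^ M * x i = ∑ j ∈ Finset.range N, ι (e j) * tp ^ (j + 1) := by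
    intro i
    have h1' : tp ^ M * x i = tp ^ (M - Mf i) * (tp ^ (Mf i) * x i) := by
      rw [← mul_assoc, ← pow_add, Nat.sub_add_cancel (hM i)]
    rw [h1', hdf i, Finset.mul_sum]
    refine hGsum _ _ fun j _ => ?_
    have he : M - Mf i + (j + 1) = (M - Mf i + j) + 1 := by omega
    rw [← mul_assoc, hmovep, mul_assoc, ← pow_add, he]
    exact hGsingle _ _
  choose Nf' ef hef using hy
  set N := Finset.univ.sup Nf' with hNdef
  have hN : ∀ i, Nf' i ≤ N := fun i => Finset.le_sup (Finset.mem_univ i)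
  set E : Fin n → ℕ → R := fun i j => if j < Nf' i then ef i j else 0 with hEdef
  have hyE : ∀ i, tp ^ M * x i = ∑ j ∈ Finset.range N, ι (E i j) * tp ^ (j + 1) := by
    intro i; rw [hef i, hpad _ N _ (hN i)]
  -- the shifted sum of squares is still zero
  have hzero : ∑ i, (tp ^ M * x i) * star (tp ^ M * x i) = 0 := by
    have hterm : ∀ i : Fin n, (tp ^ M * x i) * star (tp ^ M * x i) =
        tp ^ M * (x i * star (x i)) * tm ^ M := by
      intro i
      rw [star_mul, star_pow, hstart]
      simp only [mul_assoc]
    rw [Finset.sum_congr rfl fun i _ => hterm i]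
    calc ∑ i, tp ^ M * (x i * star (x i)) * tm ^ M
        = tp ^ M * (∑ i, x i * star (x i)) * tm ^ M := by
          rw [Finset.mul_sum, Finset.sum_mul]
      _ = 0 := by rw [hx, mul_zero, zero_mul]
  -- compute the constant terms
  have hEq : ∀ (r : R) (k : ℕ), (r * q k) * star (r * q k) = r * q k * star r := by
    intro r k
    rw [star_mul, hq_star,
      show (r * q k) * (q k * star r) = r * (q k * q k) * star r from by
        simp only [mul_assoc], hq_idem]
  have hπy : ∀ i : Fin n, π ((tp ^ M * x i) * star (tp ^ M * x i)) =
      ∑ j ∈ Finset.range N, E i j * q (j + 1) * star (E i j) := by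
    intro i
    rw [hyE i]
    have hprod : (∑ j ∈ Finset.range N, ι (E i j) * tp ^ (j + 1)) *
        star (∑ j ∈ Finset.range N, ι (E i j) * tp ^ (j + 1)) =
        ∑ j ∈ Finset.range N, ∑ k ∈ Finset.range N,
          ι (E i j) * tp ^ (j + 1) * (tm ^ (k + 1) * ι (star (E i k))) := by
      rw [star_sum, Finset.sum_mul_sum]
      refine Finset.sum_congr rfl fun j _ => Finset.sum_congr rfl fun k _ => ?_
      rw [star_mul, star_pow, hstart, hιstar]
    rw [hprod, map_sum]
    refine Finset.sum_congr rfl fun j hj => ?_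
    rw [map_sum, Finset.sum_congr rfl fun k _ => hTerm (E i j) (star (E i k)) j k,
      Finset.sum_ite_eq, if_pos hj]
  have hconst : ∑ i : Fin n, ∑ j ∈ Finset.range N,
      (E i j * q (j + 1)) * star (E i j * q (j + 1)) = 0 := by
    calc ∑ i : Fin n, ∑ j ∈ Finset.range N,
          (E i j * q (j + 1)) * star (E i j * q (j + 1))
        = ∑ i : Fin n, ∑ j ∈ Finset.range N, E i j * q (j + 1) * star (E i j) :=
          Finset.sum_congr rfl fun i _ => Finset.sum_congr rfl fun j _ => hEq _ _
      _ = ∑ i : Fin n, π ((tp ^ M * x i) * star (tp ^ M * x i)) :=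
          (Finset.sum_congr rfl fun i _ => (hπy i).symm)
      _ = 0 := by rw [← map_sum, hzero, map_zero]
  -- apply positive definiteness of R
  have hEzero : ∀ (i : Fin n) (j : ℕ), j < N → E i j * q (j + 1) = 0 := by
    have hsum' : ∑ t : Fin (n * N),
        ((fun pr : Fin n × Fin N => E pr.1 pr.2 * q ((pr.2 : ℕ) + 1))
            (finProdFinEquiv.symm t)) *
          star ((fun pr : Fin n × Fin N => E pr.1 pr.2 * q ((pr.2 : ℕ) + 1))
            (finProdFinEquiv.symm t)) = 0 := by
      rw [Equiv.sum_comp finProdFinEquiv.symm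
        (fun pr : Fin n × Fin N => (E pr.1 pr.2 * q ((pr.2 : ℕ) + 1)) *
          star (E pr.1 pr.2 * q ((pr.2 : ℕ) + 1))), Fintype.sum_prod_type, ← hconst]
      refine Finset.sum_congr rfl fun i _ => ?_
      exact Fin.sum_univ_eq_sum_range
        (fun j => (E i j * q (j + 1)) * star (E i j * q (j + 1))) N
    have h := hR (n * N) _ hsum'
    intro i j hj
    have h2' := h (finProdFinEquiv (i, ⟨j, hj⟩))
    simpa using h2'
  intro i
  have hy0 : tp ^ M * x i = 0 := by
    rw [hyE i]
    refine Finset.sum_eq_zero fun j hj => ?_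
    have hstep : ι (E i j) * tp ^ (j + 1) = ι (E i j * q (j + 1)) * tp ^ (j + 1) := by
      rw [map_mul, mul_assoc, hqtp]
    rw [hstep, hEzero i j (Finset.mem_range.1 hj), map_zero, zero_mul]
  calc x i = tm ^ M * tp ^ M * x i := by rw [htmtp, one_mul]
    _ = tm ^ M * (tp ^ M * x i) := by rw [mul_assoc]
    _ = 0 := by rw [hy0, mul_zero]
end
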